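/- Let X be a separable Banach space, Y a Banach space, G ⊆ X open, and f : G → Y a pointwise Lipschitz mapping. Then there exists a σ-directionally porous set A ⊆ G such that for every x ∈ G \ A, the set U_x of directions u ∈ X in which f'₊(x,u) exists is a closed linear subspace of X, and u ↦ f'₊(x,u) is linear on U_x. -/

import Mathlib

open Filter Topology Set Metric

section Defs
variable {X Y : Type*} [NormedAddCommGroup X] [NormedSpace ℝ X]
  [NormedAddCommGroup Y] [NormedSpace ℝ Y]

/-- One-sided directional derivative: `f'₊(x,v) = L`. -/
def HasPosDirDeriv (f : X → Y) (x v : X) (L : Y) : Prop :=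
  Tendsto (fun t : ℝ => t⁻¹ • (f (x + t • v) - f x)) (𝓝[>] (0:ℝ)) (𝓝 L)

/-- Two-sided directional derivative: `f'(x,v) = L`. -/
def HasDirDeriv (f : X → Y) (x v : X) (L : Y) : Prop :=
  Tendsto (fun t : ℝ => t⁻¹ • (f (x + t • v) - f x)) (𝓝[≠] (0:ℝ)) (𝓝 L)

/-- One-sided Hadamard directional derivative: `f'_{H+}(x,v) = L`. -/
def HasHadamardPosDirDeriv (f : X → Y) (x v : X) (L : Y) : Prop :=
  Tendsto (fun p : X × ℝ => p.2⁻¹ • (f (x + p.2 • p.1) - f x))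
    ((𝓝 v) ×ˢ (𝓝[>] (0:ℝ))) (𝓝 L)

/-- Two-sided Hadamard directional derivative: `f'_H(x,v) = L`. -/
def HasHadamardDirDeriv (f : X → Y) (x v : X) (L : Y) : Prop :=
  Tendsto (fun p : X × ℝ => p.2⁻¹ • (f (x + p.2 • p.1) - f x))
    ((𝓝 v) ×ˢ (𝓝[≠] (0:ℝ))) (𝓝 L)

/-- `f` is Lipschitz at the point `x`: `limsup_{y→x} ‖f y - f x‖/‖y-x‖ < ∞`. -/
def LipschitzAtPt (f : X → Y) (x : X) : Prop :=
  ∃ K δ : ℝ, 0 < δ ∧ ∀ y, ‖y - x‖ < δ → ‖f y - f x‖ ≤ K * ‖y - x‖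

/-- `A` is porous at `x` in the direction `v`. -/
def PorousAt (A : Set X) (x v : X) : Prop :=
  ∃ p > (0:ℝ), ∃ t : ℕ → ℝ, (∀ n, 0 < t n) ∧ Tendsto t atTop (𝓝 0) ∧
    ∀ n, ball (x + t n • v) (p * t n) ∩ A = ∅

/-- `A` is directionally porous. -/
def DirectionallyPorous (A : Set X) : Prop :=
  ∀ x ∈ A, ∃ v : X, v ≠ 0 ∧ PorousAt A x v

/-- `A` is σ-directionally porous. -/
def SigmaDirectionallyPorous (A : Set X) : Prop :=
  ∃ s : ℕ → Set X, (∀ n, DirectionallyPorous (s n)) ∧ A = ⋃ n, s n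

/-- The open cone `C(x,v,δ)`. -/
def Cone (x v : X) (δ : ℝ) : Set X :=
  {y : X | y ≠ x ∧ ‖v - ‖y - x‖⁻¹ • (y - x)‖ < δ}

/-- `f` is Hadamard differentiable at `x` with derivative `L`: the difference quotients
converge to `L v` uniformly in `v` from each compact set. -/
def HadamardDifferentiableAt (f : X → Y) (x : X) (L : X →L[ℝ] Y) : Prop :=
  ∀ C : Set X, IsCompact C →
    TendstoUniformlyOn (fun (t : ℝ) (v : X) => t⁻¹ • (f (x + t • v) - f x))
      (fun v => L v) (𝓝[≠] (0:ℝ)) C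

end Defs

section Aux
variable {X Y : Type*} [NormedAddCommGroup X] [NormedSpace ℝ X]
  [NormedAddCommGroup Y] [NormedSpace ℝ Y]

lemma norm_inv_smul {t : ℝ} (ht : 0 < t) (B : Y) : ‖t⁻¹ • B‖ = t⁻¹ * ‖B‖ := by
  rw [norm_smul, Real.norm_eq_abs, abs_of_pos (inv_pos.mpr ht)]

lemma quot_sub {t : ℝ} (ht : 0 < t) (A : Y) (L : Y) :
    t⁻¹ • A - L = t⁻¹ • (A - t • L) := by
  rw [smul_sub, smul_smul, inv_mul_cancel₀ (ne_of_gt ht), one_smul]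

lemma hpdd_iff {f : X → Y} {x u : X} {L : Y} :
    HasPosDirDeriv f x u L ↔ ∀ ε : ℝ, 0 < ε → ∃ δ : ℝ, 0 < δ ∧
      ∀ t : ℝ, 0 < t → t < δ → ‖f (x + t • u) - f x - t • L‖ ≤ ε * t := by
  rw [HasPosDirDeriv, Metric.tendsto_nhdsWithin_nhds]
  constructor
  · intro h ε hε
    obtain ⟨δ, hδ, H⟩ := h ε hε
    refine ⟨δ, hδ, fun t ht htδ => ?_⟩
    have h1 := H (x := t) ht (by rw [Real.dist_eq, sub_zero, abs_of_pos ht]; exact htδ)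
    rw [dist_eq_norm, quot_sub ht, norm_inv_smul ht] at h1
    have h2 : t⁻¹ * ‖f (x + t • u) - f x - t • L‖ ≤ ε := le_of_lt h1
    calc ‖f (x + t • u) - f x - t • L‖
        = t * (t⁻¹ * ‖f (x + t • u) - f x - t • L‖) := by
          field_simp
      _ ≤ t * ε := by nlinarith
      _ = ε * t := mul_comm _ _
  · intro h ε hε
    obtain ⟨δ, hδ, H⟩ := h (ε/2) (by linarith)
    refine ⟨δ, hδ, fun {t} ht htδ => ?_⟩
    rw [Real.dist_eq, sub_zero] at htδ
    have ht' : (0:ℝ) < t := ht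
    rw [abs_of_pos ht'] at htδ
    have h1 := H t ht' htδ
    rw [dist_eq_norm, quot_sub ht', norm_inv_smul ht']
    calc t⁻¹ * ‖f (x + t • u) - f x - t • L‖ ≤ t⁻¹ * (ε/2 * t) := by
          have := inv_pos.mpr ht'
          nlinarith
      _ = ε/2 := by field_simp
      _ < ε := by linarith

lemma hpdd_not {f : X → Y} {x u : X} {L : Y} (h : ¬ HasPosDirDeriv f x u L) :
    ∃ ε : ℚ, 0 < ε ∧ ∀ τ : ℝ, 0 < τ → ∃ t : ℝ, 0 < t ∧ t < τ ∧
      (ε : ℝ) * t ≤ ‖f (x + t • u) - f x - t • L‖ := by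
  rw [hpdd_iff] at h
  push_neg at h
  obtain ⟨ε, hε, H⟩ := h
  obtain ⟨q, hq0, hqε⟩ := exists_rat_btwn hε
  refine ⟨q, by exact_mod_cast hq0, fun τ hτ => ?_⟩
  obtain ⟨t, ht, htτ, hbad⟩ := H τ hτ
  exact ⟨t, ht, htτ, le_of_lt (lt_of_lt_of_le (by nlinarith) (le_of_lt hbad))⟩

lemma hpdd_zero (f : X → Y) (x : X) : HasPosDirDeriv f x 0 0 := by
  have : (fun t : ℝ => t⁻¹ • (f (x + t • (0:X)) - f x)) = fun _ => (0:Y) := by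
    funext t; simp
  rw [HasPosDirDeriv, this]
  exact tendsto_const_nhds

lemma hpdd_unique {f : X → Y} {x u : X} {L M : Y}
    (h1 : HasPosDirDeriv f x u L) (h2 : HasPosDirDeriv f x u M) : L = M :=
  tendsto_nhds_unique h1 h2

lemma hpdd_smul_pos {f : X → Y} {x u : X} {L : Y} {c : ℝ} (hc : 0 < c)
    (h : HasPosDirDeriv f x u L) : HasPosDirDeriv f x (c • u) (c • L) := by
  have hmap : Tendsto (fun t : ℝ => c * t) (𝓝[>] (0:ℝ)) (𝓝[>] (0:ℝ)) := by
    apply tendsto_nhdsWithin_of_tendsto_nhds_of_eventually_within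
    · have : Tendsto (fun t : ℝ => c * t) (𝓝 0) (𝓝 (c * 0)) :=
        (continuous_const.mul continuous_id).tendsto 0
      simpa using this.mono_left nhdsWithin_le_nhds
    · filter_upwards [self_mem_nhdsWithin] with t ht
      exact mul_pos hc ht
  have h2 := (h.comp hmap).const_smul c
  apply h2.congr'
  filter_upwards [self_mem_nhdsWithin] with t ht
  have ht' : (0:ℝ) < t := ht
  have hct : c * t ≠ 0 := by positivity
  show c • ((c*t)⁻¹ • (f (x + (c*t) • u) - f x)) = t⁻¹ • (f (x + t • (c • u)) - f x)
  rw [smul_smul, mul_inv, ← mul_assoc, mul_inv_cancel₀ (ne_of_gt hc), one_mul,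
    smul_smul, mul_comm t c]

lemma hpdd_norm_le {f : X → Y} {x u : X} {L : Y} {c δ₀ : ℝ}
    (hδ₀ : 0 < δ₀) (hc : 0 ≤ c)
    (hLip : ∀ z : X, ‖z - x‖ < δ₀ → ‖f z - f x‖ ≤ c * ‖z - x‖)
    (h : HasPosDirDeriv f x u L) : ‖L‖ ≤ c * ‖u‖ := by
  have hev : ∀ᶠ t in 𝓝[>] (0:ℝ), ‖t⁻¹ • (f (x + t • u) - f x)‖ ≤ c * ‖u‖ := by
    have hmem : Ioo (0:ℝ) (δ₀ / (‖u‖ + 1)) ∈ 𝓝[>] (0:ℝ) :=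
      Ioo_mem_nhdsGT_of_mem ⟨le_refl _, by positivity⟩
    filter_upwards [hmem] with t ht
    obtain ⟨ht0, htδ⟩ := ht
    have hzx : ‖(x + t • u) - x‖ < δ₀ := by
      have : ‖(x + t • u) - x‖ = t * ‖u‖ := by
        rw [add_sub_cancel_left, norm_smul, Real.norm_eq_abs, abs_of_pos ht0]
      rw [this]
      have h1 : t * (‖u‖ + 1) < δ₀ := by
        rw [lt_div_iff₀ (by positivity : (0:ℝ) < ‖u‖ + 1)] at htδ
        exact htδ
      nlinarith [norm_nonneg u]
    have := hLip _ hzx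
    rw [add_sub_cancel_left, norm_smul, Real.norm_eq_abs, abs_of_pos ht0] at this
    rw [norm_inv_smul ht0, add_sub_cancel_left] at *
    calc t⁻¹ * ‖f (x + t • u) - f x‖ ≤ t⁻¹ * (c * (t * ‖u‖)) := by
          have := inv_pos.mpr ht0; nlinarith
      _ = c * ‖u‖ := by field_simp
  exact le_of_tendsto (h.norm) hev

end Aux
section Aux2
variable {X Y : Type*} [NormedAddCommGroup X] [NormedSpace ℝ X]
  [NormedAddCommGroup Y] [NormedSpace ℝ Y]

def LipC (f : X → Y) (x : X) (c δ₀ : ℝ) : Prop :=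
  ∀ z : X, ‖z - x‖ < δ₀ → ‖f z - f x‖ ≤ c * ‖z - x‖

def RayOK (f : X → Y) (x v : X) (L : Y) (ε δ : ℝ) : Prop :=
  ∀ t : ℝ, 0 < t → t < δ → ‖f (x + t • v) - f x - t • L‖ ≤ ε * t

def ConeOK (f : X → Y) (x v : X) (L : Y) (ρ ε δ : ℝ) : Prop :=
  ∀ t : ℝ, 0 < t → t < δ → ∀ w : X, ‖w - v‖ ≤ ρ → ‖f (x + t • w) - f x - t • L‖ ≤ ε * t

def BadAt (f : X → Y) (x w : X) (M : Y) (ε : ℝ) : Prop :=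
  ∀ τ : ℝ, 0 < τ → ∃ t : ℝ, 0 < t ∧ t < τ ∧ ε * t ≤ ‖f (x + t • w) - f x - t • M‖

def BadCone (f : X → Y) (x v : X) (L : Y) (ρ ε : ℝ) : Prop :=
  ∀ τ : ℝ, 0 < τ → ∃ t : ℝ, 0 < t ∧ t < τ ∧
    ∃ w : X, ‖w - v‖ ≤ ρ ∧ ε * t ≤ ‖f (x + t • w) - f x - t • L‖

lemma seq_of_bad {P : ℝ → Prop} {b : ℝ} (hb : 0 < b)
    (h : ∀ τ : ℝ, 0 < τ → ∃ t : ℝ, 0 < t ∧ t < τ ∧ P t) :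
    ∃ t : ℕ → ℝ, (∀ n, 0 < t n) ∧ (∀ n, t n < b) ∧
      Tendsto t atTop (𝓝 0) ∧ ∀ n, P (t n) := by
  have h' : ∀ n : ℕ, ∃ t : ℝ, 0 < t ∧ t < min b (1 / ((n:ℝ)+1)) ∧ P t := by
    intro n
    exact h _ (lt_min hb (by positivity))
  choose t ht0 htlt hP using h'
  refine ⟨t, ht0, fun n => lt_of_lt_of_le (htlt n) (min_le_left _ _), ?_, hP⟩
  apply squeeze_zero (fun n => le_of_lt (ht0 n))
    (fun n => le_of_lt (lt_of_lt_of_le (htlt n) (min_le_right _ _)))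
  exact tendsto_one_div_add_atTop_nhds_zero_nat

/-- The "Hadamard upgrade" bad set. -/
def SB (f : X → Y) (G : Set X) (c δ₀ ε ρ ε₁ δ : ℝ) : Set X :=
  {x | x ∈ G ∧ 0 < c ∧ 0 < ρ ∧ 0 < δ₀ ∧ 0 < ε₁ ∧ 0 < δ ∧ 3*c*ρ + ε₁ < ε ∧
    LipC f x c δ₀ ∧ ∃ v L, RayOK f x v L ε₁ δ ∧ BadCone f x v L ρ ε}

lemma SB_porous (f : X → Y) (G : Set X) (c δ₀ ε ρ ε₁ δ : ℝ) :
    DirectionallyPorous (SB f G c δ₀ ε ρ ε₁ δ) := by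
  rintro x ⟨hxG, hc, hρ, hδ₀, hε₁, hδ, hcon, hLip, v, L, hRay, hBad⟩
  have hε : 0 < ε := by nlinarith
  have hLnorm : v = 0 → ‖L‖ ≤ ε₁ := by
    intro hv0
    obtain ⟨t, ht0, htδ, hRt⟩ : ∃ t : ℝ, 0 < t ∧ t < δ ∧
        ‖f (x + t • v) - f x - t • L‖ ≤ ε₁ * t :=
      ⟨δ/2, by linarith, by linarith, hRay _ (by linarith) (by linarith)⟩
    rw [hv0] at hRt
    simp only [smul_zero, add_zero, sub_self, zero_sub, norm_neg, norm_smul,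
      Real.norm_eq_abs, abs_of_pos ht0] at hRt
    nlinarith
  have hv : v ≠ 0 := by
    intro hv0
    obtain ⟨t, ht0, htτ, w, hwv, hbad⟩ :=
      hBad (min δ (δ₀ / (ρ + 1))) (lt_min hδ (by positivity))
    have htδ : t < δ := lt_of_lt_of_le htτ (min_le_left _ _)
    have htδ₀ : t * (ρ+1) < δ₀ := by
      have := lt_of_lt_of_le htτ (min_le_right _ _)
      rw [lt_div_iff₀ (by positivity : (0:ℝ) < ρ + 1)] at this
      exact this
    have hw : ‖w‖ ≤ ρ := by rw [hv0, sub_zero] at hwv; exact hwv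
    have hLip1 : ‖f (x + t • w) - f x‖ ≤ c * (t * ρ) := by
      have hd : ‖(x + t • w) - x‖ < δ₀ := by
        rw [add_sub_cancel_left, norm_smul, Real.norm_eq_abs, abs_of_pos ht0]
        nlinarith
      have := hLip _ hd
      rw [add_sub_cancel_left, norm_smul, Real.norm_eq_abs, abs_of_pos ht0] at this
      nlinarith [mul_nonneg (mul_nonneg (le_of_lt hc) (le_of_lt ht0)) (sub_nonneg.mpr hw)]
    have hL := hLnorm hv0
    have : ‖f (x + t • w) - f x - t • L‖ ≤ c * (t*ρ) + t * ε₁ := by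
      calc ‖f (x + t • w) - f x - t • L‖ ≤ ‖f (x + t • w) - f x‖ + ‖t • L‖ :=
            norm_sub_le _ _
        _ ≤ c * (t*ρ) + t * ε₁ := by
            rw [norm_smul, Real.norm_eq_abs, abs_of_pos ht0]
            nlinarith
    nlinarith [mul_pos ht0 (by linarith : (0:ℝ) < ε - (3*c*ρ + ε₁)),
      mul_pos (mul_pos hc ht0) hρ]
  refine ⟨v, hv, ρ, hρ, ?_⟩
  have hbound : (0:ℝ) < min δ (δ₀ / (2*ρ + 1)) := lt_min hδ (by positivity)
  obtain ⟨t, ht0, htb, htend, hP⟩ := seq_of_bad hbound hBad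
  refine ⟨t, ht0, htend, fun n => ?_⟩
  rw [Set.eq_empty_iff_forall_notMem]
  rintro y ⟨hyball, hySB⟩
  obtain ⟨w, hwv, hbad⟩ := hP n
  set s := t n with hs
  have hs0 : 0 < s := ht0 n
  have hsδ : s < δ := lt_of_lt_of_le (htb n) (min_le_left _ _)
  have hsδ₀ : s * (2*ρ + 1) < δ₀ := by
    have := lt_of_lt_of_le (htb n) (min_le_right _ _)
    rw [lt_div_iff₀ (by positivity : (0:ℝ) < 2*ρ + 1)] at this
    exact this
  have hyb : ‖y - (x + s • v)‖ < ρ * s := by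
    rw [mem_ball, dist_eq_norm] at hyball
    exact hyball
  obtain ⟨-, -, -, -, -, -, -, hyLip, -⟩ := hySB
  have hyLip' : ∀ z : X, ∀ r : ℝ, ‖z - y‖ ≤ r → r < δ₀ → ‖f z - f y‖ ≤ c * r := by
    intro z r h1 h2
    calc ‖f z - f y‖ ≤ c * ‖z - y‖ := hyLip z (lt_of_le_of_lt h1 h2)
      _ ≤ c * r := by nlinarith [norm_nonneg (z - y)]
  -- estimate 1 : ‖f (x + s•w) - f y‖ ≤ c * (2ρs)
  have e1 : ‖f (x + s • w) - f y‖ ≤ c * (2*ρ*s) := by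
    apply hyLip' _ _ ?_ (by nlinarith)
    calc ‖(x + s • w) - y‖ = ‖s • (w - v) + -(y - (x + s • v))‖ := by
          congr 1; rw [smul_sub]; abel
      _ ≤ ‖s • (w - v)‖ + ‖y - (x + s • v)‖ := by
          refine le_trans (norm_add_le _ _) ?_
          rw [norm_neg]
      _ ≤ s * ρ + ρ * s := by
          have h1 : ‖s • (w - v)‖ ≤ s * ρ := by
            rw [norm_smul, Real.norm_eq_abs, abs_of_pos hs0]
            nlinarith [norm_nonneg (w-v)]
          have h2 := le_of_lt hyb
          linarith
      _ = 2*ρ*s := by ring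
  -- estimate 2 : ‖f y - f (x + s•v)‖ ≤ c * (ρ s)
  have e2 : ‖f y - f (x + s • v)‖ ≤ c * (ρ*s) := by
    rw [norm_sub_rev]
    apply hyLip' _ _ ?_ (by nlinarith)
    rw [norm_sub_rev]
    exact le_of_lt hyb
  -- estimate 3 : ray at x
  have e3 : ‖f (x + s • v) - f x - s • L‖ ≤ ε₁ * s := hRay s hs0 hsδ
  have key : ‖f (x + s • w) - f x - s • L‖ ≤ 3*c*ρ*s + ε₁*s := by
    calc ‖f (x + s • w) - f x - s • L‖
        = ‖(f (x + s • w) - f y) + ((f y - f (x + s • v)) + (f (x + s • v) - f x - s • L))‖ := by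
          congr 1; abel
      _ ≤ ‖f (x + s • w) - f y‖ + (‖f y - f (x + s • v)‖ + ‖f (x + s • v) - f x - s • L‖) := by
          refine le_trans (norm_add_le _ _) ?_
          gcongr
          exact norm_add_le _ _
      _ ≤ c * (2*ρ*s) + (c * (ρ*s) + ε₁ * s) := by gcongr
      _ = 3*c*ρ*s + ε₁*s := by ring
  nlinarith

end Aux2

section Aux3
variable {X Y : Type*} [NormedAddCommGroup X] [NormedSpace ℝ X]
  [NormedAddCommGroup Y] [NormedSpace ℝ Y]

/-- The "additivity" bad set. -/
def SA (f : X → Y) (G : Set X) (c δ₀ ε ε₁ ρ δ : ℝ) (v' : X) (L' : Y) : Set X :=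
  {x | x ∈ G ∧ 0 < c ∧ 0 < ρ ∧ 0 < δ₀ ∧ 0 < ε₁ ∧ 0 < δ ∧ 2*ε₁ + c*ρ < ε ∧
    LipC f x c δ₀ ∧ ConeOK f x v' L' ρ ε₁ δ ∧
    ∃ u Lu, RayOK f x u Lu ε₁ δ ∧ BadAt f x (u + v') (Lu + L') ε}

lemma SA_porous (f : X → Y) (G : Set X) (c δ₀ ε ε₁ ρ δ : ℝ) (v' : X) (L' : Y) :
    DirectionallyPorous (SA f G c δ₀ ε ε₁ ρ δ v' L') := by
  rintro x ⟨hxG, hc, hρ, hδ₀, hε₁, hδ, hcon, hLip, hCone, u, Lu, hRay, hBad⟩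
  have hε : 0 < ε := by nlinarith
  have hu : u ≠ 0 := by
    intro hu0
    have hLu : ‖Lu‖ ≤ ε₁ := by
      have hRt := hRay (δ/2) (by linarith) (by linarith)
      rw [hu0] at hRt
      simp only [smul_zero, add_zero, sub_self, zero_sub, norm_neg, norm_smul,
        Real.norm_eq_abs, abs_of_pos (by linarith : (0:ℝ) < δ/2)] at hRt
      nlinarith
    obtain ⟨t, ht0, htδ, hbad⟩ := hBad δ hδ
    rw [hu0, zero_add] at hbad
    have h1 := hCone t ht0 htδ v' (by rw [sub_self, norm_zero]; positivity)
    have h2 : ‖f (x + t • v') - f x - t • (Lu + L')‖ ≤ ε₁ * t + t * ‖Lu‖ := by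
      calc ‖f (x + t • v') - f x - t • (Lu + L')‖
          = ‖(f (x + t • v') - f x - t • L') - t • Lu‖ := by
            rw [smul_add]; congr 1; abel
        _ ≤ ‖f (x + t • v') - f x - t • L'‖ + ‖t • Lu‖ := norm_sub_le _ _
        _ ≤ ε₁ * t + t * ‖Lu‖ := by
            rw [norm_smul, Real.norm_eq_abs, abs_of_pos ht0]; gcongr
    nlinarith [mul_pos (mul_pos hc ht0) hρ]
  refine ⟨u, hu, ρ, hρ, ?_⟩
  have hbound : (0:ℝ) < min δ (δ₀ / (ρ + 1)) := lt_min hδ (by positivity)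
  obtain ⟨t, ht0, htb, htend, hP⟩ := seq_of_bad hbound hBad
  refine ⟨t, ht0, htend, fun n => ?_⟩
  rw [Set.eq_empty_iff_forall_notMem]
  rintro y ⟨hyball, hySA⟩
  have hbad := hP n
  set s := t n with hs
  have hs0 : 0 < s := ht0 n
  have hsδ : s < δ := lt_of_lt_of_le (htb n) (min_le_left _ _)
  have hsδ₀ : s * (ρ + 1) < δ₀ := by
    have := lt_of_lt_of_le (htb n) (min_le_right _ _)
    rw [lt_div_iff₀ (by positivity : (0:ℝ) < ρ + 1)] at this
    exact this
  have hyb : ‖y - (x + s • u)‖ < ρ * s := by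
    rw [mem_ball, dist_eq_norm] at hyball; exact hyball
  obtain ⟨-, -, -, -, -, -, -, hyLip, hyCone, -⟩ := hySA
  have hyLip' : ∀ z : X, ∀ r : ℝ, ‖z - y‖ ≤ r → r < δ₀ → ‖f z - f y‖ ≤ c * r := by
    intro z r h1 h2
    calc ‖f z - f y‖ ≤ c * ‖z - y‖ := hyLip z (lt_of_le_of_lt h1 h2)
      _ ≤ c * r := by nlinarith [norm_nonneg (z - y)]
  set d := v' + s⁻¹ • ((x + s • u) - y) with hd
  have hyd : y + s • d = x + s • (u + v') := by
    rw [hd, smul_add, smul_add, smul_smul, mul_inv_cancel₀ (ne_of_gt hs0), one_smul]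
    abel
  have hdv : ‖d - v'‖ ≤ ρ := by
    rw [hd, add_sub_cancel_left, norm_smul, Real.norm_eq_abs, abs_of_pos (inv_pos.mpr hs0)]
    rw [norm_sub_rev] at hyb
    calc s⁻¹ * ‖(x + s • u) - y‖ ≤ s⁻¹ * (ρ * s) := by
          have := inv_pos.mpr hs0; nlinarith
      _ = ρ := by field_simp
  have e1 : ‖f (x + s • (u + v')) - f y - s • L'‖ ≤ ε₁ * s := by
    rw [← hyd]; exact hyCone s hs0 hsδ d hdv
  have e2 : ‖f y - f (x + s • u)‖ ≤ c * (ρ*s) := by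
    rw [norm_sub_rev]
    apply hyLip' _ _ ?_ (by nlinarith)
    rw [norm_sub_rev]
    exact le_of_lt hyb
  have e3 : ‖f (x + s • u) - f x - s • Lu‖ ≤ ε₁ * s := hRay s hs0 hsδ
  have key : ‖f (x + s • (u + v')) - f x - s • (Lu + L')‖ ≤ 2*ε₁*s + c*(ρ*s) := by
    calc ‖f (x + s • (u + v')) - f x - s • (Lu + L')‖
        = ‖(f (x + s • (u + v')) - f y - s • L') + ((f y - f (x + s • u)) +
            (f (x + s • u) - f x - s • Lu))‖ := by
          congr 1; module
      _ ≤ ‖f (x + s • (u + v')) - f y - s • L'‖ + (‖f y - f (x + s • u)‖ +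
            ‖f (x + s • u) - f x - s • Lu‖) := by
          refine le_trans (norm_add_le _ _) ?_
          gcongr
          exact norm_add_le _ _
      _ ≤ ε₁ * s + (c * (ρ*s) + ε₁ * s) := by gcongr
      _ = 2*ε₁*s + c*(ρ*s) := by ring
  nlinarith [mul_pos hs0 (by linarith : (0:ℝ) < ε - (2*ε₁ + c*ρ))]

/-- The "negation" bad set. -/
def SN (f : X → Y) (G : Set X) (c δ₀ ε ε₁ ρ δ : ℝ) (u' : X) (L' : Y) : Set X :=
  {x | x ∈ G ∧ 0 < c ∧ 0 < ρ ∧ 0 < δ₀ ∧ 0 < ε₁ ∧ 0 < δ ∧ ε₁ + c*ρ < ε ∧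
    LipC f x c δ₀ ∧ ∃ u₀, ‖u₀ - u'‖ ≤ ρ ∧ ConeOK f x u₀ L' (3*ρ) ε₁ δ ∧
      BadAt f x (-u₀) (-L') ε}

lemma SN_porous (f : X → Y) (G : Set X) (c δ₀ ε ε₁ ρ δ : ℝ) (u' : X) (L' : Y) :
    DirectionallyPorous (SN f G c δ₀ ε ε₁ ρ δ u' L') := by
  rintro x ⟨hxG, hc, hρ, hδ₀, hε₁, hδ, hcon, hLip, u₀, hu₀u', hCone, hBad⟩
  have hε : 0 < ε := by nlinarith
  have hu : u₀ ≠ 0 := by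
    intro hu0
    have hL' : ‖L'‖ ≤ ε₁ := by
      have h1 := hCone (δ/2) (by linarith) (by linarith) 0 (by
        rw [hu0]; simp; positivity)
      rw [smul_zero, add_zero, sub_self, zero_sub, norm_neg, norm_smul,
        Real.norm_eq_abs, abs_of_pos (by linarith : (0:ℝ) < δ/2)] at h1
      nlinarith
    obtain ⟨t, ht0, htδ, hbad⟩ := hBad δ hδ
    rw [hu0, neg_zero, smul_zero, add_zero, sub_self, zero_sub, smul_neg, neg_neg,
      norm_smul, Real.norm_eq_abs, abs_of_pos ht0] at hbad
    nlinarith [mul_pos (mul_pos hc ht0) hρ]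
  refine ⟨-u₀, neg_ne_zero.mpr hu, ρ, hρ, ?_⟩
  have hbound : (0:ℝ) < min δ (δ₀ / (ρ + 1)) := lt_min hδ (by positivity)
  obtain ⟨t, ht0, htb, htend, hP⟩ := seq_of_bad hbound hBad
  refine ⟨t, ht0, htend, fun n => ?_⟩
  rw [Set.eq_empty_iff_forall_notMem]
  rintro y ⟨hyball, hySN⟩
  have hbad := hP n
  set s := t n with hs
  have hs0 : 0 < s := ht0 n
  have hsδ : s < δ := lt_of_lt_of_le (htb n) (min_le_left _ _)
  have hsδ₀ : s * (ρ + 1) < δ₀ := by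
    have := lt_of_lt_of_le (htb n) (min_le_right _ _)
    rw [lt_div_iff₀ (by positivity : (0:ℝ) < ρ + 1)] at this
    exact this
  have hyb : ‖y - (x + s • (-u₀))‖ < ρ * s := by
    rw [mem_ball, dist_eq_norm] at hyball; exact hyball
  obtain ⟨-, -, -, -, -, -, -, hyLip, u₁, hu₁u', hyCone, -⟩ := hySN
  have hyLip' : ∀ z : X, ∀ r : ℝ, ‖z - y‖ ≤ r → r < δ₀ → ‖f z - f y‖ ≤ c * r := by
    intro z r h1 h2
    calc ‖f z - f y‖ ≤ c * ‖z - y‖ := hyLip z (lt_of_le_of_lt h1 h2)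
      _ ≤ c * r := by nlinarith [norm_nonneg (z - y)]
  set d := s⁻¹ • (x - y) with hd
  have hyd : y + s • d = x := by
    rw [hd, smul_smul, mul_inv_cancel₀ (ne_of_gt hs0), one_smul]
    abel
  have hdu₀ : ‖d - u₀‖ ≤ ρ := by
    have : d - u₀ = s⁻¹ • ((x + s • (-u₀)) - y) := by
      rw [hd]
      match_scalars <;> field_simp
    rw [this, norm_smul, Real.norm_eq_abs, abs_of_pos (inv_pos.mpr hs0)]
    rw [norm_sub_rev] at hyb
    calc s⁻¹ * ‖(x + s • (-u₀)) - y‖ ≤ s⁻¹ * (ρ * s) := by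
          have := inv_pos.mpr hs0; nlinarith
      _ = ρ := by field_simp
  have hdu₁ : ‖d - u₁‖ ≤ 3*ρ := by
    calc ‖d - u₁‖ = ‖(d - u₀) + ((u₀ - u') + -(u₁ - u'))‖ := by congr 1; module
      _ ≤ ‖d - u₀‖ + (‖u₀ - u'‖ + ‖u₁ - u'‖) := by
          refine le_trans (norm_add_le _ _) ?_
          gcongr
          refine le_trans (norm_add_le _ _) ?_
          rw [norm_neg]
      _ ≤ ρ + (ρ + ρ) := by gcongr
      _ = 3*ρ := by ring
  have e1 : ‖f x - f y - s • L'‖ ≤ ε₁ * s := by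
    rw [← hyd]; exact hyCone s hs0 hsδ d hdu₁
  have e2 : ‖f y - f (x + s • (-u₀))‖ ≤ c * (ρ*s) := by
    rw [norm_sub_rev]
    apply hyLip' _ _ ?_ (by nlinarith)
    rw [norm_sub_rev]
    exact le_of_lt hyb
  have key : ‖f (x + s • (-u₀)) - f x - s • (-L')‖ ≤ ε₁*s + c*(ρ*s) := by
    calc ‖f (x + s • (-u₀)) - f x - s • (-L')‖
        = ‖(f x - f y - s • L') + (f y - f (x + s • (-u₀)))‖ := by
          rw [← norm_neg ((f x - f y - s • L') + (f y - f (x + s • (-u₀))))]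
          congr 1; module
      _ ≤ ‖f x - f y - s • L'‖ + ‖f y - f (x + s • (-u₀))‖ := norm_add_le _ _
      _ ≤ ε₁*s + c*(ρ*s) := by gcongr
  nlinarith [mul_pos hs0 (by linarith : (0:ℝ) < ε - (ε₁ + c*ρ))]

end Aux3

section Aux4
variable {X Y : Type*} [NormedAddCommGroup X] [NormedSpace ℝ X]
  [NormedAddCommGroup Y] [NormedSpace ℝ Y]

lemma sigma_of_countable {ι : Type*} [Countable ι] (A : ι → Set X)
    (h : ∀ i, DirectionallyPorous (A i)) : SigmaDirectionallyPorous (⋃ i, A i) := by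
  rcases isEmpty_or_nonempty ι with hι | hι
  · refine ⟨fun _ => ∅, fun n => by rintro x ⟨⟩, ?_⟩
    simp
  · obtain ⟨e, he⟩ := exists_surjective_nat ι
    refine ⟨fun n => A (e n), fun n => h (e n), ?_⟩
    ext z; simp only [Set.mem_iUnion]
    exact ⟨fun ⟨i, hi⟩ => by obtain ⟨n, rfl⟩ := he i; exact ⟨n, hi⟩,
      fun ⟨n, hn⟩ => ⟨e n, hn⟩⟩

set_option maxHeartbeats 1000000 in
lemma dY_approx {f : X → Y} {G : Set X} (hG : IsOpen G)
    (hf : ∀ x ∈ G, LipschitzAtPt f x) (dX : ℕ → X) (hdX : DenseRange dX)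
    {x : X} (hx : x ∈ G) {v : X} {L : Y} (hv : HasPosDirDeriv f x v L)
    {η : ℝ} (hη : 0 < η) :
    ∃ i : ℕ × ℕ × ℚ, ‖(i.2.2 : ℝ) • (f (dX i.1) - f (dX i.2.1)) - L‖ < η := by
  obtain ⟨r, hr0, hr⟩ := Metric.isOpen_iff.mp hG x hx
  obtain ⟨δ, hδ0, hδ⟩ := hpdd_iff.mp hv (η/4) (by linarith)
  set t := min (δ/2) (r/(2*(‖v‖+1))) with htdef
  have ht0 : 0 < t := lt_min (by linarith) (by positivity)
  have htδ : t < δ := lt_of_le_of_lt (min_le_left _ _) (by linarith)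
  set z := x + t • v with hzdef
  have hzG : z ∈ G := by
    apply hr
    rw [mem_ball, dist_eq_norm, hzdef, add_sub_cancel_left, norm_smul,
      Real.norm_eq_abs, abs_of_pos ht0]
    have h1 : t ≤ r/(2*(‖v‖+1)) := min_le_right _ _
    have h2 : t * (‖v‖+1) ≤ r/2 := by
      rw [le_div_iff₀ (by positivity : (0:ℝ) < 2*(‖v‖+1))] at h1
      nlinarith
    nlinarith [norm_nonneg v]
  have hquot : ‖t⁻¹ • (f z - f x) - L‖ ≤ η/4 := by
    rw [quot_sub ht0, norm_inv_smul ht0]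
    have := hδ t ht0 htδ
    calc t⁻¹ * ‖f (x + t • v) - f x - t • L‖ ≤ t⁻¹ * (η/4 * t) := by
          have := inv_pos.mpr ht0; nlinarith
      _ = η/4 := by field_simp
  set B := ‖f z - f x‖ with hBdef
  have hB0 : 0 ≤ B := norm_nonneg _
  obtain ⟨q, hq1, hq2⟩ := exists_rat_btwn
    (show t⁻¹ < t⁻¹ + η/(4*(B+1)) by
      have : (0:ℝ) < η/(4*(B+1)) := by positivity
      linarith)
  have hq0 : 0 < (q:ℝ) := lt_trans (inv_pos.mpr ht0) hq1
  have hqt : |(q:ℝ) - t⁻¹| < η/(4*(B+1)) := by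
    rw [abs_of_pos (by linarith)]; linarith
  set β := η/(8*((q:ℝ)+1)) with hβdef
  have hβ0 : 0 < β := by positivity
  have happrox : ∀ w : X, w ∈ G → ∃ n : ℕ, ‖f (dX n) - f w‖ ≤ β := by
    intro w hw
    obtain ⟨K, δw, hδw0, hK⟩ := hf w hw
    set K' := max K 0 with hK'def
    have hK'0 : 0 ≤ K' := le_max_right _ _
    set α := min δw (β/(K'+1)) with hαdef
    have hα0 : 0 < α := lt_min hδw0 (by positivity)
    obtain ⟨n, hn⟩ := hdX.exists_dist_lt w hα0
    rw [dist_comm, dist_eq_norm] at hn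
    refine ⟨n, ?_⟩
    have h1 : ‖f (dX n) - f w‖ ≤ K * ‖dX n - w‖ :=
      hK _ (lt_of_lt_of_le hn (min_le_left _ _))
    have h2 : ‖dX n - w‖ < β/(K'+1) := lt_of_lt_of_le hn (min_le_right _ _)
    have h3 : K * ‖dX n - w‖ ≤ K' * ‖dX n - w‖ := by
      have := norm_nonneg (dX n - w)
      nlinarith [le_max_left K (0:ℝ)]
    have h4 : K' * ‖dX n - w‖ ≤ K' * (β/(K'+1)) := by nlinarith
    have h5 : K' * (β/(K'+1)) ≤ β := by
      rw [← mul_div_assoc, div_le_iff₀ (by positivity : (0:ℝ) < K'+1)]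
      nlinarith
    linarith
  obtain ⟨n, hn⟩ := happrox z hzG
  obtain ⟨m, hm⟩ := happrox x hx
  refine ⟨(n, m, q), ?_⟩
  have key : (q:ℝ) • (f (dX n) - f (dX m)) - L =
      ((q:ℝ) • ((f (dX n) - f z) - (f (dX m) - f x))) +
      ((((q:ℝ) - t⁻¹) • (f z - f x)) + (t⁻¹ • (f z - f x) - L)) := by
    module
  calc ‖(q:ℝ) • (f (dX n) - f (dX m)) - L‖
      ≤ ‖(q:ℝ) • ((f (dX n) - f z) - (f (dX m) - f x))‖ +
        (‖((q:ℝ) - t⁻¹) • (f z - f x)‖ + ‖t⁻¹ • (f z - f x) - L‖) := by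
        rw [key]
        refine le_trans (norm_add_le _ _) ?_
        gcongr
        exact norm_add_le _ _
    _ ≤ (q:ℝ) * (2*β) + (η/(4*(B+1)) * B + η/4) := by
        gcongr
        · rw [norm_smul, Real.norm_eq_abs, abs_of_pos hq0]
          have : ‖(f (dX n) - f z) - (f (dX m) - f x)‖ ≤ 2*β := by
            refine le_trans (norm_sub_le _ _) ?_
            linarith
          nlinarith
        · rw [norm_smul, Real.norm_eq_abs, ← hBdef]
          have hB1 : B ≤ B := le_refl _
          nlinarith [abs_nonneg ((q:ℝ) - t⁻¹), norm_nonneg (f z - f x)]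
    _ < η := by
        have e1 : (q:ℝ) * (2*β) ≤ η/4 := by
          have h1 : (q:ℝ) * (2*β) = (2*(q:ℝ)/(8*((q:ℝ)+1))) * η := by
            rw [hβdef]; ring
          have h2 : 2*(q:ℝ)/(8*((q:ℝ)+1)) ≤ 1/4 := by
            rw [div_le_div_iff₀ (by positivity) (by norm_num : (0:ℝ) < 4)]
            linarith
          rw [h1]
          calc (2*(q:ℝ)/(8*((q:ℝ)+1))) * η ≤ (1/4) * η :=
              mul_le_mul_of_nonneg_right h2 (le_of_lt hη)
            _ = η/4 := by ring
        have e2 : η/(4*(B+1)) * B ≤ η/4 := by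
          have h1 : η/(4*(B+1)) * B = (η * B) / (4*(B+1)) := by ring
          rw [h1, div_le_div_iff₀ (by positivity) (by norm_num : (0:ℝ) < 4)]
          nlinarith
        linarith

end Aux4

section Aux5
variable {X Y : Type*} [NormedAddCommGroup X] [NormedSpace ℝ X]
  [NormedAddCommGroup Y] [NormedSpace ℝ Y]

/-- countable family of candidate values in `Y`. -/
def dYf (f : X → Y) (dX : ℕ → X) (i : ℕ × ℕ × ℚ) : Y :=
  (i.2.2 : ℝ) • (f (dX i.1) - f (dX i.2.1))

lemma cone_prop {f : X → Y} {G : Set X} {x : X} (hxG : x ∈ G) {c δ₀ : ℚ}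
    (hc : 0 < c) (hδ₀ : 0 < δ₀) (hLip : LipC f x (c:ℝ) (δ₀:ℝ))
    (hnotB : ∀ a b e r e1 d : ℚ, x ∉ SB f G (a:ℝ) (b:ℝ) (e:ℝ) (r:ℝ) (e1:ℝ) (d:ℝ))
    {v : X} {L : Y} (hv : HasPosDirDeriv f x v L) (ε : ℚ) (hε : 0 < ε) :
    ∃ δ : ℝ, 0 < δ ∧ ConeOK f x v L ((ε/(12*c) : ℚ) : ℝ) (ε:ℝ) δ := by
  by_contra hcon
  push_neg at hcon
  set ρ : ℚ := ε/(12*c) with hρdef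
  have hρpos : 0 < ρ := by rw [hρdef]; positivity
  have hBad : BadCone f x v L (ρ:ℝ) (ε:ℝ) := by
    intro τ hτ
    have h2 := hcon τ hτ
    rw [ConeOK] at h2
    push_neg at h2
    obtain ⟨t, ht0, htτ, w, hwv, hbad⟩ := h2
    exact ⟨t, ht0, htτ, w, hwv, le_of_lt hbad⟩
  obtain ⟨δ', hδ'0, hRay'⟩ := hpdd_iff.mp hv ((ε:ℝ)/2) (by positivity)
  obtain ⟨δq, hδq0, hδqlt⟩ := exists_rat_btwn hδ'0
  have hδq0' : 0 < δq := by exact_mod_cast hδq0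
  apply hnotB c δ₀ ε ρ (ε/2) δq
  refine ⟨hxG, by exact_mod_cast hc, by exact_mod_cast hρpos,
    by exact_mod_cast hδ₀, by positivity, by exact_mod_cast hδq0', ?_, hLip, v, L, ?_, hBad⟩
  · have hq : 3*c*ρ + ε/2 < ε := by
      rw [hρdef]
      rw [show 3*c*(ε/(12*c)) = ε/4 by field_simp; ring]
      linarith
    exact_mod_cast hq
  · intro t ht htq
    have := hRay' t ht (lt_trans htq hδqlt)
    calc ‖f (x + t • v) - f x - t • L‖ ≤ (ε:ℝ)/2 * t := this
      _ = ((ε/2 : ℚ):ℝ) * t := by push_cast; ring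

lemma add_prop {f : X → Y} {G : Set X} (hG : IsOpen G)
    (hf : ∀ x ∈ G, LipschitzAtPt f x) {dX : ℕ → X} (hdX : DenseRange dX)
    {x : X} (hxG : x ∈ G) {c δ₀ : ℚ}
    (hc : 0 < c) (hδ₀ : 0 < δ₀) (hLip : LipC f x (c:ℝ) (δ₀:ℝ))
    (hnotB : ∀ a b e r e1 d : ℚ, x ∉ SB f G (a:ℝ) (b:ℝ) (e:ℝ) (r:ℝ) (e1:ℝ) (d:ℝ))
    (hnotA : ∀ (a b e e1 r d : ℚ) (n : ℕ) (i : ℕ × ℕ × ℚ),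
      x ∉ SA f G (a:ℝ) (b:ℝ) (e:ℝ) (e1:ℝ) (r:ℝ) (d:ℝ) (dX n) (dYf f dX i))
    {u v : X} {Lu Lv : Y} (hu : HasPosDirDeriv f x u Lu)
    (hv : HasPosDirDeriv f x v Lv) :
    HasPosDirDeriv f x (u + v) (Lu + Lv) := by
  by_contra hcontra
  obtain ⟨ε4, hε4, hBad4⟩ := hpdd_not hcontra
  set ε : ℚ := ε4/4 with hεdef
  have hε : 0 < ε := by rw [hεdef]; positivity
  obtain ⟨δu, hδu0, hconeU⟩ := cone_prop hxG hc hδ₀ hLip hnotB hu (ε/2) (by positivity)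
  obtain ⟨δv, hδv0, hconeV⟩ := cone_prop hxG hc hδ₀ hLip hnotB hv (ε/4) (by positivity)
  set ρu : ℚ := (ε/2)/(12*c) with hρudef
  set ρv : ℚ := (ε/4)/(12*c) with hρvdef
  have hρu0 : 0 < ρu := by rw [hρudef]; positivity
  have hρv0 : 0 < ρv := by rw [hρvdef]; positivity
  set ρ : ℚ := min (ρv/2) (ε/c) with hρdef
  have hρ0 : 0 < ρ := lt_min (by positivity) (by positivity)
  have hrad : (0:ℝ) < min ((min (ρv/2) ρu : ℚ) : ℝ) 1 := by
    apply lt_min _ one_pos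
    have : (0:ℚ) < min (ρv/2) ρu := lt_min (by positivity) hρu0
    exact_mod_cast this
  obtain ⟨n, hn⟩ := hdX.exists_dist_lt v hrad
  rw [dist_comm, dist_eq_norm] at hn
  have hnv : ‖dX n - v‖ ≤ ((ρv/2 : ℚ):ℝ) := by
    have h1 : ((min (ρv/2) ρu : ℚ):ℝ) ≤ ((ρv/2 : ℚ):ℝ) := by
      exact_mod_cast min_le_left (ρv/2) ρu
    exact le_trans (le_of_lt (lt_of_lt_of_le hn (min_le_left _ _))) h1
  have hnu : ‖dX n - v‖ ≤ ((ρu : ℚ):ℝ) := by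
    have h1 : ((min (ρv/2) ρu : ℚ):ℝ) ≤ ((ρu : ℚ):ℝ) := by
      exact_mod_cast min_le_right (ρv/2) ρu
    exact le_trans (le_of_lt (lt_of_lt_of_le hn (min_le_left _ _))) h1
  obtain ⟨i, hi⟩ := dY_approx hG hf dX hdX hxG hv
    (show (0:ℝ) < ((ε/4 : ℚ):ℝ) by exact_mod_cast (by positivity : (0:ℚ) < ε/4))
  have hi' : ‖dYf f dX i - Lv‖ ≤ ((ε/4 : ℚ):ℝ) := le_of_lt hi
  obtain ⟨δq, hδq0, hδqlt⟩ := exists_rat_btwn (lt_min hδu0 hδv0)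
  have hδq0' : 0 < δq := by exact_mod_cast hδq0
  have hδqu : (δq:ℝ) < δu := lt_of_lt_of_le hδqlt (min_le_left _ _)
  have hδqv : (δq:ℝ) < δv := lt_of_lt_of_le hδqlt (min_le_right _ _)
  apply hnotA c δ₀ (3*ε) (ε/2) ρ δq n i
  have hcρ : c*ρ ≤ ε := by
    calc c*ρ ≤ c*(ε/c) := by
          have := min_le_right (ρv/2) (ε/c)
          nlinarith
      _ = ε := by field_simp
  refine ⟨hxG, by exact_mod_cast hc, by exact_mod_cast hρ0, by exact_mod_cast hδ₀,
    by positivity, by exact_mod_cast hδq0', ?_, hLip, ?_, ?_⟩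
  · -- constraint : 2*(ε/2) + c*ρ < 3*ε
    have hq : 2*(ε/2) + c*ρ < 3*ε := by linarith
    exact_mod_cast hq
  · -- ConeOK f x (dX n) (dY i) ρ (ε/2) δq
    intro t ht htδ w hw
    have hwv : ‖w - v‖ ≤ ((ρv:ℚ):ℝ) := by
      have hle : ((ρ:ℚ):ℝ) ≤ ((ρv/2 : ℚ):ℝ) := by
        exact_mod_cast min_le_left (ρv/2) (ε/c)
      calc ‖w - v‖ = ‖(w - dX n) + (dX n - v)‖ := by congr 1; abel
        _ ≤ ‖w - dX n‖ + ‖dX n - v‖ := norm_add_le _ _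
        _ ≤ ((ρv/2 : ℚ):ℝ) + ((ρv/2 : ℚ):ℝ) := by
            gcongr
            exact le_trans hw hle
        _ = ((ρv:ℚ):ℝ) := by push_cast; ring
    have hwv' : ‖w - v‖ ≤ (((ε/4)/(12*c) : ℚ):ℝ) := by
      rw [hρvdef] at hwv; exact hwv
    have h1 := hconeV t ht (lt_trans htδ hδqv) w hwv'
    have h2 : f (x + t • w) - f x - t • (dYf f dX i) =
        (f (x + t • w) - f x - t • Lv) + t • (Lv - dYf f dX i) := by module
    calc ‖f (x + t • w) - f x - t • (dYf f dX i)‖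
        ≤ ‖f (x + t • w) - f x - t • Lv‖ + ‖t • (Lv - dYf f dX i)‖ := by
          rw [h2]; exact norm_add_le _ _
      _ ≤ ((ε/4 : ℚ):ℝ) * t + t * ((ε/4 : ℚ):ℝ) := by
          refine add_le_add h1 ?_
          rw [norm_smul, Real.norm_eq_abs, abs_of_pos ht, norm_sub_rev]
          have ht' : 0 ≤ t := le_of_lt ht
          nlinarith [hi', norm_nonneg (dYf f dX i - Lv)]
      _ = ((ε/2 : ℚ):ℝ) * t := by push_cast; ring
  · -- the existential part
    refine ⟨u + (v - dX n), Lu, ?_, ?_⟩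
    · -- RayOK
      intro t ht htδ
      apply hconeU t ht (lt_trans htδ hδqu)
      rw [show u + (v - dX n) - u = -(dX n - v) by abel, norm_neg]
      rw [hρudef] at hnu
      exact hnu
    · -- BadAt
      rw [show u + (v - dX n) + dX n = u + v by abel]
      intro τ hτ
      obtain ⟨t, ht0, htτ, hb⟩ := hBad4 τ hτ
      refine ⟨t, ht0, htτ, ?_⟩
      have h2 : f (x + t • (u + v)) - f x - t • (Lu + Lv) =
          (f (x + t • (u + v)) - f x - t • (Lu + dYf f dX i)) +
            t • (dYf f dX i - Lv) := by module
      have h3 : ‖t • (dYf f dX i - Lv)‖ ≤ t * ((ε/4 : ℚ):ℝ) := by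
        rw [norm_smul, Real.norm_eq_abs, abs_of_pos ht0]
        gcongr
      have h4 : (ε4:ℝ) * t ≤ ‖f (x + t • (u + v)) - f x - t • (Lu + dYf f dX i)‖ +
          t * ((ε/4 : ℚ):ℝ) := by
        calc (ε4:ℝ) * t ≤ ‖f (x + t • (u + v)) - f x - t • (Lu + Lv)‖ := hb
          _ ≤ ‖f (x + t • (u + v)) - f x - t • (Lu + dYf f dX i)‖ +
              ‖t • (dYf f dX i - Lv)‖ := by rw [h2]; exact norm_add_le _ _
          _ ≤ _ := by linarith [h3]
      have h5 : ((3*ε : ℚ):ℝ) * t ≤ (ε4:ℝ) * t - t * ((ε/4 : ℚ):ℝ) := by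
        have hle : ((3*ε : ℚ):ℝ) + ((ε/4 : ℚ):ℝ) ≤ (ε4:ℝ) := by
          have hε4' : (0:ℝ) < (ε4:ℝ) := by exact_mod_cast hε4
          rw [hεdef]; push_cast; linarith
        nlinarith [mul_le_mul_of_nonneg_right hle (le_of_lt ht0)]
      linarith

end Aux5

section Aux6
variable {X Y : Type*} [NormedAddCommGroup X] [NormedSpace ℝ X]
  [NormedAddCommGroup Y] [NormedSpace ℝ Y]

lemma neg_prop {f : X → Y} {G : Set X} (hG : IsOpen G)
    (hf : ∀ x ∈ G, LipschitzAtPt f x) {dX : ℕ → X} (hdX : DenseRange dX)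
    {x : X} (hxG : x ∈ G) {c δ₀ : ℚ}
    (hc : 0 < c) (hδ₀ : 0 < δ₀) (hLip : LipC f x (c:ℝ) (δ₀:ℝ))
    (hnotB : ∀ a b e r e1 d : ℚ, x ∉ SB f G (a:ℝ) (b:ℝ) (e:ℝ) (r:ℝ) (e1:ℝ) (d:ℝ))
    (hnotN : ∀ (a b e e1 r d : ℚ) (n : ℕ) (i : ℕ × ℕ × ℚ),
      x ∉ SN f G (a:ℝ) (b:ℝ) (e:ℝ) (e1:ℝ) (r:ℝ) (d:ℝ) (dX n) (dYf f dX i))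
    {u : X} {Lu : Y} (hu : HasPosDirDeriv f x u Lu) :
    HasPosDirDeriv f x (-u) (-Lu) := by
  by_contra hcontra
  obtain ⟨ε4, hε4, hBad4⟩ := hpdd_not hcontra
  set ε : ℚ := ε4/4 with hεdef
  have hε : 0 < ε := by rw [hεdef]; positivity
  have hε4' : (0:ℝ) < (ε4:ℝ) := by exact_mod_cast hε4
  obtain ⟨δu, hδu0, hconeU⟩ := cone_prop hxG hc hδ₀ hLip hnotB hu (ε/4) (by positivity)
  set ρu : ℚ := (ε/4)/(12*c) with hρudef
  have hρu0 : 0 < ρu := by rw [hρudef]; positivity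
  set ρ : ℚ := min (ρu/3) (ε/c) with hρdef
  have hρ0 : 0 < ρ := lt_min (by positivity) (by positivity)
  have hrad : (0:ℝ) < ((ρ:ℚ):ℝ) := by exact_mod_cast hρ0
  obtain ⟨n, hn⟩ := hdX.exists_dist_lt u hrad
  rw [dist_comm, dist_eq_norm] at hn
  obtain ⟨i, hi⟩ := dY_approx hG hf dX hdX hxG hu
    (show (0:ℝ) < ((ε/4 : ℚ):ℝ) by exact_mod_cast (by positivity : (0:ℚ) < ε/4))
  have hi' : ‖dYf f dX i - Lu‖ ≤ ((ε/4 : ℚ):ℝ) := le_of_lt hi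
  obtain ⟨δq, hδq0, hδqlt⟩ := exists_rat_btwn hδu0
  have hδq0' : 0 < δq := by exact_mod_cast hδq0
  apply hnotN c δ₀ (3*ε) (ε/2) ρ δq n i
  have hcρ : c*ρ ≤ ε := by
    calc c*ρ ≤ c*(ε/c) := by
          have := min_le_right (ρu/3) (ε/c)
          nlinarith
      _ = ε := by field_simp
  refine ⟨hxG, by exact_mod_cast hc, by exact_mod_cast hρ0, by exact_mod_cast hδ₀,
    by positivity, by exact_mod_cast hδq0', ?_, hLip, u, ?_, ?_, ?_⟩
  · -- constraint : (ε/2) + c*ρ < 3*ε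
    have hq : ε/2 + c*ρ < 3*ε := by linarith
    exact_mod_cast hq
  · -- ‖u - dX n‖ ≤ ρ
    rw [norm_sub_rev]
    exact le_of_lt hn
  · -- ConeOK f x u (dY i) (3*ρ) (ε/2) δq
    intro t ht htδ w hw
    have hwu : ‖w - u‖ ≤ (((ε/4)/(12*c) : ℚ):ℝ) := by
      have h1 : (3:ℝ) * ((ρ:ℚ):ℝ) ≤ ((ρu:ℚ):ℝ) := by
        have h2 : 3*ρ ≤ ρu := by
          have := min_le_left (ρu/3) (ε/c)
          linarith
        exact_mod_cast h2
      calc ‖w - u‖ ≤ 3 * ((ρ:ℚ):ℝ) := hw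
        _ ≤ ((ρu:ℚ):ℝ) := h1
        _ = (((ε/4)/(12*c) : ℚ):ℝ) := by rw [hρudef]
    have h1 := hconeU t ht (lt_trans htδ hδqlt) w hwu
    have h2 : f (x + t • w) - f x - t • (dYf f dX i) =
        (f (x + t • w) - f x - t • Lu) + t • (Lu - dYf f dX i) := by module
    calc ‖f (x + t • w) - f x - t • (dYf f dX i)‖
        ≤ ‖f (x + t • w) - f x - t • Lu‖ + ‖t • (Lu - dYf f dX i)‖ := by
          rw [h2]; exact norm_add_le _ _
      _ ≤ ((ε/4 : ℚ):ℝ) * t + t * ((ε/4 : ℚ):ℝ) := by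
          refine add_le_add h1 ?_
          rw [norm_smul, Real.norm_eq_abs, abs_of_pos ht, norm_sub_rev]
          have ht' : 0 ≤ t := le_of_lt ht
          nlinarith [hi', norm_nonneg (dYf f dX i - Lu)]
      _ = ((ε/2 : ℚ):ℝ) * t := by push_cast; ring
  · -- BadAt f x (-u) (-(dY i)) (3*ε)
    intro τ hτ
    obtain ⟨t, ht0, htτ, hb⟩ := hBad4 τ hτ
    refine ⟨t, ht0, htτ, ?_⟩
    have h2 : f (x + t • (-u)) - f x - t • (-Lu) =
        (f (x + t • (-u)) - f x - t • (-(dYf f dX i))) +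
          t • (Lu - dYf f dX i) := by module
    have h3 : ‖t • (Lu - dYf f dX i)‖ ≤ t * ((ε/4 : ℚ):ℝ) := by
      rw [norm_smul, Real.norm_eq_abs, abs_of_pos ht0, norm_sub_rev]
      gcongr
    have h4 : (ε4:ℝ) * t ≤ ‖f (x + t • (-u)) - f x - t • (-(dYf f dX i))‖ +
        t * ((ε/4 : ℚ):ℝ) := by
      calc (ε4:ℝ) * t ≤ ‖f (x + t • (-u)) - f x - t • (-Lu)‖ := hb
        _ ≤ ‖f (x + t • (-u)) - f x - t • (-(dYf f dX i))‖ +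
            ‖t • (Lu - dYf f dX i)‖ := by rw [h2]; exact norm_add_le _ _
        _ ≤ _ := by linarith [h3]
    have h5 : ((3*ε : ℚ):ℝ) * t ≤ (ε4:ℝ) * t - t * ((ε/4 : ℚ):ℝ) := by
      have hle : ((3*ε : ℚ):ℝ) + ((ε/4 : ℚ):ℝ) ≤ (ε4:ℝ) := by
        rw [hεdef]; push_cast; linarith
      nlinarith [mul_le_mul_of_nonneg_right hle (le_of_lt ht0)]
    linarith

end Aux6

set_option maxHeartbeats 1000000 in
theorem stmt15 {X Y : Type*} [NormedAddCommGroup X] [NormedSpace ℝ X] [CompleteSpace X]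
    [TopologicalSpace.SeparableSpace X]
    [NormedAddCommGroup Y] [NormedSpace ℝ Y] [CompleteSpace Y]
    (G : Set X) (hG : IsOpen G) (f : X → Y)
    (hf : ∀ x ∈ G, LipschitzAtPt f x) :
    ∃ A : Set X, SigmaDirectionallyPorous A ∧ A ⊆ G ∧
      ∀ x ∈ G \ A,
        ∃ U : Submodule ℝ X, (U : Set X) = {u : X | ∃ L, HasPosDirDeriv f x u L} ∧
          IsClosed (U : Set X) ∧
          ∃ T : U →ₗ[ℝ] Y, ∀ u : U, HasPosDirDeriv f x (u : X) (T u) := by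
  have : Nonempty X := ⟨0⟩
  obtain ⟨dX, hdX⟩ := TopologicalSpace.exists_dense_seq X
  classical
  set Q6 := (ℚ × ℚ × ℚ × ℚ × ℚ × ℚ) with hQ6
  set ι := Q6 ⊕ ((Q6 × ℕ × (ℕ × ℕ × ℚ)) ⊕ (Q6 × ℕ × (ℕ × ℕ × ℚ))) with hι
  set F : ι → Set X := Sum.elim
      (fun p => SB f G (p.1:ℝ) (p.2.1:ℝ) (p.2.2.1:ℝ) (p.2.2.2.1:ℝ) (p.2.2.2.2.1:ℝ)
        (p.2.2.2.2.2:ℝ))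
      (Sum.elim
        (fun p => SA f G (p.1.1:ℝ) (p.1.2.1:ℝ) (p.1.2.2.1:ℝ) (p.1.2.2.2.1:ℝ)
          (p.1.2.2.2.2.1:ℝ) (p.1.2.2.2.2.2:ℝ) (dX p.2.1) (dYf f dX p.2.2))
        (fun p => SN f G (p.1.1:ℝ) (p.1.2.1:ℝ) (p.1.2.2.1:ℝ) (p.1.2.2.2.1:ℝ)
          (p.1.2.2.2.2.1:ℝ) (p.1.2.2.2.2.2:ℝ) (dX p.2.1) (dYf f dX p.2.2))) with hF
  refine ⟨⋃ i, F i, sigma_of_countable F ?_, ?_, ?_⟩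
  · rintro (p | p | p)
    · exact SB_porous f G _ _ _ _ _ _
    · exact SA_porous f G _ _ _ _ _ _ _ _
    · exact SN_porous f G _ _ _ _ _ _ _ _
  · rintro z hz
    rw [Set.mem_iUnion] at hz
    obtain ⟨i, hi⟩ := hz
    rcases i with p | p | p
    · exact hi.1
    · exact hi.1
    · exact hi.1
  · rintro x ⟨hxG, hxA⟩
    have hnotB : ∀ a b e r e1 d : ℚ,
        x ∉ SB f G (a:ℝ) (b:ℝ) (e:ℝ) (r:ℝ) (e1:ℝ) (d:ℝ) := by
      intro a b e r e1 d hmem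
      exact hxA (Set.mem_iUnion.mpr ⟨Sum.inl (a, b, e, r, e1, d), hmem⟩)
    have hnotA : ∀ (a b e e1 r d : ℚ) (n : ℕ) (i : ℕ × ℕ × ℚ),
        x ∉ SA f G (a:ℝ) (b:ℝ) (e:ℝ) (e1:ℝ) (r:ℝ) (d:ℝ) (dX n) (dYf f dX i) := by
      intro a b e e1 r d n i hmem
      exact hxA (Set.mem_iUnion.mpr ⟨Sum.inr (Sum.inl ((a, b, e, e1, r, d), n, i)), hmem⟩)
    have hnotN : ∀ (a b e e1 r d : ℚ) (n : ℕ) (i : ℕ × ℕ × ℚ),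
        x ∉ SN f G (a:ℝ) (b:ℝ) (e:ℝ) (e1:ℝ) (r:ℝ) (d:ℝ) (dX n) (dYf f dX i) := by
      intro a b e e1 r d n i hmem
      exact hxA (Set.mem_iUnion.mpr ⟨Sum.inr (Sum.inr ((a, b, e, e1, r, d), n, i)), hmem⟩)
    -- rational Lipschitz data at x
    obtain ⟨K, δK, hδK0, hK⟩ := hf x hxG
    obtain ⟨c, hcK⟩ := exists_rat_gt (max K 0)
    have hc : 0 < c := by
      have h0 : (0:ℝ) ≤ max K 0 := le_max_right _ _
      have : (0:ℝ) < (c:ℝ) := lt_of_le_of_lt h0 hcK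
      exact_mod_cast this
    obtain ⟨δ₀, hδ₀0, hδ₀K⟩ := exists_rat_btwn hδK0
    have hδ₀ : 0 < δ₀ := by exact_mod_cast hδ₀0
    have hLip : LipC f x (c:ℝ) (δ₀:ℝ) := by
      intro z hz
      have h1 := hK z (lt_trans hz hδ₀K)
      have h2 : K * ‖z - x‖ ≤ (c:ℝ) * ‖z - x‖ := by
        have hKc : K ≤ (c:ℝ) := le_trans (le_max_left _ _) (le_of_lt hcK)
        nlinarith [norm_nonneg (z - x)]
      linarith
    set S := {u : X | ∃ L, HasPosDirDeriv f x u L} with hS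
    have hadd : ∀ (u v : X) (Lu Lv : Y), HasPosDirDeriv f x u Lu →
        HasPosDirDeriv f x v Lv → HasPosDirDeriv f x (u + v) (Lu + Lv) :=
      fun u v Lu Lv hu hv => add_prop hG hf hdX hxG hc hδ₀ hLip hnotB hnotA hu hv
    have hneg : ∀ (u : X) (Lu : Y), HasPosDirDeriv f x u Lu →
        HasPosDirDeriv f x (-u) (-Lu) :=
      fun u Lu hu => neg_prop hG hf hdX hxG hc hδ₀ hLip hnotB hnotN hu
    have hcone : ∀ (v : X) (L : Y), HasPosDirDeriv f x v L → ∀ ε : ℚ, 0 < ε →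
        ∃ δ : ℝ, 0 < δ ∧ ConeOK f x v L ((ε/(12*c) : ℚ) : ℝ) (ε:ℝ) δ :=
      fun v L hv ε hε => cone_prop hxG hc hδ₀ hLip hnotB hv ε hε
    have hbound : ∀ (u : X) (Lu : Y), HasPosDirDeriv f x u Lu → ‖Lu‖ ≤ (c:ℝ) * ‖u‖ :=
      fun u Lu hu => hpdd_norm_le (by exact_mod_cast hδ₀) (by positivity) hLip hu
    -- the submodule
    let U : Submodule ℝ X :=
      { carrier := S
        zero_mem' := ⟨0, hpdd_zero f x⟩
        add_mem' := fun ⟨Lu, hu⟩ ⟨Lv, hv⟩ => ⟨Lu + Lv, hadd _ _ _ _ hu hv⟩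
        smul_mem' := by
          rintro r u ⟨L, hL⟩
          rcases lt_trichotomy r 0 with h | h | h
          · refine ⟨r • L, ?_⟩
            have h1 := hpdd_smul_pos (neg_pos.mpr h) (hneg u L hL)
            simpa [neg_smul_neg] using h1
          · subst h
            exact ⟨0, by rw [zero_smul]; exact hpdd_zero f x⟩
          · exact ⟨r • L, hpdd_smul_pos h hL⟩ }
    -- closedness
    have hclosed : IsClosed S := by
      apply IsSeqClosed.isClosed
      intro w a hw hwa
      choose L hL using hw
      have hdiff : ∀ m k : ℕ, ‖L m - L k‖ ≤ (c:ℝ) * ‖w m - w k‖ := by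
        intro m k
        have h1 : HasPosDirDeriv f x (w m + -(w k)) (L m + -(L k)) :=
          hadd _ _ _ _ (hL m) (hneg _ _ (hL k))
        have h2 := hbound _ _ h1
        simpa [sub_eq_add_neg] using h2
      have hcL : CauchySeq L := by
        rw [Metric.cauchySeq_iff]
        intro η hη
        have hw' := hwa.cauchySeq
        rw [Metric.cauchySeq_iff] at hw'
        obtain ⟨N, hN⟩ := hw' (η/((c:ℝ)+1)) (by positivity)
        refine ⟨N, fun m hm k hk => ?_⟩
        have h1 := hN m hm k hk
        rw [dist_eq_norm] at h1 ⊢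
        have h2 := hdiff m k
        have hc' : (0:ℝ) < (c:ℝ) := by exact_mod_cast hc
        calc ‖L m - L k‖ ≤ (c:ℝ) * ‖w m - w k‖ := h2
          _ ≤ (c:ℝ) * (η/((c:ℝ)+1)) := by nlinarith
          _ < η := by
              have hlt : (c:ℝ)/((c:ℝ)+1) < 1 := by
                rw [div_lt_one (by positivity)]; linarith
              calc (c:ℝ) * (η/((c:ℝ)+1)) = η * ((c:ℝ)/((c:ℝ)+1)) := by ring
                _ < η * 1 := by nlinarith
                _ = η := mul_one η
      obtain ⟨Ly, hLy⟩ := cauchySeq_tendsto_of_complete hcL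
      refine ⟨Ly, hpdd_iff.mpr fun η hη => ?_⟩
      obtain ⟨εq, hεq0, hεqlt⟩ := exists_rat_btwn (show (0:ℝ) < η/3 by positivity)
      have hεq : 0 < εq := by exact_mod_cast hεq0
      have hrho : (0:ℝ) < ((εq/(12*c) : ℚ):ℝ) := by
        exact_mod_cast (by positivity : (0:ℚ) < εq/(12*c))
      obtain ⟨N1, hN1⟩ := Metric.tendsto_atTop.mp hwa _ hrho
      obtain ⟨N2, hN2⟩ := Metric.tendsto_atTop.mp hLy _ (show (0:ℝ) < (εq:ℝ) by
        exact_mod_cast hεq)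
      set n := max N1 N2 with hn
      have h1 := hN1 n (le_max_left _ _)
      have h2 := hN2 n (le_max_right _ _)
      rw [dist_eq_norm] at h1 h2
      obtain ⟨δ, hδ0, hC⟩ := hcone (w n) (L n) (hL n) εq hεq
      refine ⟨δ, hδ0, fun t ht htδ => ?_⟩
      have h3 : ‖a - w n‖ ≤ ((εq/(12*c) : ℚ):ℝ) := by
        rw [norm_sub_rev]
        exact le_of_lt h1
      have h4 := hC t ht htδ a h3
      have h5 : f (x + t • a) - f x - t • Ly =
          (f (x + t • a) - f x - t • (L n)) + t • (L n - Ly) := by module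
      calc ‖f (x + t • a) - f x - t • Ly‖
          ≤ ‖f (x + t • a) - f x - t • (L n)‖ + ‖t • (L n - Ly)‖ := by
            rw [h5]; exact norm_add_le _ _
        _ ≤ (εq:ℝ) * t + t * (εq:ℝ) := by
            refine add_le_add h4 ?_
            rw [norm_smul, Real.norm_eq_abs, abs_of_pos ht]
            nlinarith [le_of_lt h2, norm_nonneg (L n - Ly), le_of_lt ht]
        _ ≤ η * t := by nlinarith [le_of_lt ht]
    -- the derivative assignment
    let D : X → Y := fun u => if h : ∃ L, HasPosDirDeriv f x u L then h.choose else 0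
    have hD : ∀ u ∈ S, HasPosDirDeriv f x u (D u) := by
      intro u hu
      show HasPosDirDeriv f x u (if h : ∃ L, HasPosDirDeriv f x u L then h.choose else 0)
      have hu' : ∃ L, HasPosDirDeriv f x u L := hu
      rw [dif_pos hu']
      exact hu'.choose_spec
    have hDadd : ∀ u v : X, u ∈ S → v ∈ S → D (u + v) = D u + D v := by
      intro u v hu hv
      exact hpdd_unique (hD _ (U.add_mem hu hv)) (hadd _ _ _ _ (hD _ hu) (hD _ hv))
    have hDsmul : ∀ (r : ℝ) (u : X), u ∈ S → D (r • u) = r • D u := by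
      intro r u hu
      rcases lt_trichotomy r 0 with h | h | h
      · have h1 := hpdd_smul_pos (neg_pos.mpr h) (hneg u (D u) (hD _ hu))
        rw [neg_smul_neg, neg_smul_neg] at h1
        exact hpdd_unique (hD _ (U.smul_mem r hu)) h1
      · subst h
        rw [zero_smul, zero_smul]
        exact hpdd_unique (hD _ (U.zero_mem)) (hpdd_zero f x)
      · exact hpdd_unique (hD _ (U.smul_mem r hu)) (hpdd_smul_pos h (hD _ hu))
    refine ⟨U, rfl, hclosed, ?_⟩
    refine ⟨{ toFun := fun u => D u.1
              map_add' := fun a b => hDadd a.1 b.1 a.2 b.2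
              map_smul' := fun r a => hDsmul r a.1 a.2 }, ?_⟩
    intro u
    exact hD u.1 u.2
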